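/- Let P be a nonzero polynomial over ℂ, let n ≥ 1 be an integer, let ε be a primitive n-th root of unity, and let c ∈ ℂ be such that c·P(z) = P(εz) for all z ∈ ℂ. Then there exist an integer r with 0 ≤ r < n and a polynomial R over ℂ such that c = ε^r and P(z) = z^r·R(z^n). -/

import Mathlib

open Polynomial

lemma coeff_comp_C_mul_X (p : Polynomial ℂ) (a : ℂ) (k : ℕ) :
    (p.comp (C a * X)).coeff k = a ^ k * p.coeff k := by
  rw [comp_eq_sum_left, Polynomial.sum_def, finset_sum_coeff]
  simp only [mul_pow, ← C_pow, ← mul_assoc, ← C_mul, coeff_C_mul, coeff_X_pow]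
  rw [Finset.sum_congr rfl (fun e _ => by rw [mul_ite, mul_one, mul_zero])]
  rw [Finset.sum_ite_eq p.support k (fun e => p.coeff e * a ^ e)]
  by_cases hk : k ∈ p.support
  · simp [hk, mul_comm]
  · simp [hk, Polynomial.notMem_support_iff.mp hk]

/-- If `c ⬝ P(z) = P(ε z)` for a primitive `n`-th root of unity `ε`, then
`c = ε ^ r` and `P = z ^ r R(z ^ n)` for some `0 ≤ r < n` and polynomial `R`. -/
theorem root_of_unity_symmetry (P : Polynomial ℂ) (hP : P ≠ 0) (n : ℕ) (hn : 1 ≤ n)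
    (ε : ℂ) (hε : IsPrimitiveRoot ε n) (c : ℂ)
    (h : ∀ z : ℂ, c * P.eval z = P.eval (ε * z)) :
    ∃ (r : ℕ) (R : Polynomial ℂ), r < n ∧ c = ε ^ r ∧
      P = Polynomial.X ^ r * R.comp (Polynomial.X ^ n) := by
  have hne : (0:ℕ) < n := hn
  have heq : C c * P = P.comp (C ε * X) := by
    apply Polynomial.funext
    intro z
    simp [← h z]
  have hcoeff : ∀ k, c * P.coeff k = ε ^ k * P.coeff k := by
    intro k
    have := congrArg (fun q => Polynomial.coeff q k) heq
    simp [coeff_comp_C_mul_X] at this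
    linear_combination this
  have hpow : ∀ k, ε ^ k = ε ^ (k % n) := by
    intro k
    conv_lhs => rw [← Nat.mod_add_div k n, pow_add, pow_mul, hε.pow_eq_one, one_pow, mul_one]
  -- for each k with coeff ≠ 0, c = ε ^ (k % n)
  have hc : ∀ k, P.coeff k ≠ 0 → c = ε ^ (k % n) := by
    intro k hk
    have := hcoeff k
    rw [hpow k] at this
    exact mul_right_cancel₀ hk this
  set r := P.natDegree % n with hr
  have hdeg : P.coeff P.natDegree ≠ 0 := Polynomial.leadingCoeff_ne_zero.mpr hP
  have hcr : c = ε ^ r := hc _ hdeg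
  have hrn : r < n := Nat.mod_lt _ hne
  -- every k in support satisfies k % n = r
  have hsupp : ∀ k ∈ P.support, k % n = r := by
    intro k hk
    have hk' : P.coeff k ≠ 0 := Polynomial.mem_support_iff.mp hk
    have : ε ^ (k % n) = ε ^ r := (hc k hk').symm.trans hcr
    exact hε.pow_inj (Nat.mod_lt _ hne) hrn this
  refine ⟨r, ∑ k ∈ P.support, C (P.coeff k) * X ^ ((k - r) / n), hrn, hcr, ?_⟩
  rw [Polynomial.sum_comp, Finset.mul_sum]
  conv_lhs => rw [P.as_sum_support_C_mul_X_pow]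
  refine Finset.sum_congr rfl fun k hk => ?_
  have hkr : k % n = r := hsupp k hk
  have hrk : r ≤ k := hkr ▸ Nat.mod_le k n
  have hdvd : n ∣ k - r := (Nat.modEq_iff_dvd' hrk).mp
    (by rw [Nat.ModEq, Nat.mod_eq_of_lt hrn, hkr])
  rw [mul_comp, C_comp, pow_comp, X_comp, ← pow_mul,
    Nat.mul_div_cancel' hdvd, mul_left_comm, ← pow_add]
  congr 2
  omega
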